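/- Let D ≥ 1, N ≥ 2, let x_1, …, x_N ∈ ℝ^D be pairwise distinct, let ε > 0, and let ρ = max_{i,j} ‖x_i − x_j‖. Then there exists a coupling π of the mixture measure ν_ε and the empirical measure μ_X = (1/N)·Σ_{i=1}^N δ_{x_i} such that ∫_{ℝ^D × ℝ^D} ‖x − y‖² dπ(x,y) ≤ ε² · D · (ln(1 + ρ))². In particular the squared 2-Wasserstein distance between ν_ε and μ_X is at most ε² · D · (ln(1 + ρ))². -/

import Mathlib

open MeasureTheory Real ENNReal

/-- The Gaussian density on `ℝ^D` with center `x` and scale `σ`: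
`g_{x,σ}(y) = (2πσ²)^{-D/2} · exp(−‖y−x‖²/(2σ²))`. -/
noncomputable def gaussDensity (D : ℕ) (x : EuclideanSpace ℝ (Fin D)) (σ : ℝ)
    (y : EuclideanSpace ℝ (Fin D)) : ℝ :=
  (2 * Real.pi * σ ^ 2) ^ (-(D : ℝ) / 2) * Real.exp (-‖y - x‖ ^ 2 / (2 * σ ^ 2))

/-- `min_{j ≠ i} ‖x_i − x_j‖`, the distance from `x_i` to its nearest other point. -/
noncomputable def minDist {D N : ℕ} (hN : 2 ≤ N) (x : Fin N → EuclideanSpace ℝ (Fin D))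
    (i : Fin N) : ℝ :=
  (Finset.univ.erase i).inf'
    (by
      rw [← Finset.card_pos, Finset.card_erase_of_mem (Finset.mem_univ i),
        Finset.card_univ, Fintype.card_fin]
      omega)
    fun j => ‖x i - x j‖

/-- The adaptive bandwidth `σ_i(ε) = ε · ln(1 + min_{j ≠ i} ‖x_i − x_j‖)`. -/
noncomputable def sigmaEps {D N : ℕ} (hN : 2 ≤ N) (x : Fin N → EuclideanSpace ℝ (Fin D))
    (ε : ℝ) (i : Fin N) : ℝ :=
  ε * Real.log (1 + minDist hN x i)

/-- The mixture representation `f_{X,σ(ε)}(y) = (1/N)·Σ_i g_{x_i, σ_i(ε)}(y)`. -/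
noncomputable def mixtureDensity {D N : ℕ} (hN : 2 ≤ N) (x : Fin N → EuclideanSpace ℝ (Fin D))
    (ε : ℝ) (y : EuclideanSpace ℝ (Fin D)) : ℝ :=
  (1 / (N : ℝ)) * ∑ i, gaussDensity D (x i) (sigmaEps hN x ε i) y

/-- The measure `ν_ε` on `ℝ^D` with Lebesgue density `f_{X,σ(ε)}`. -/
noncomputable def mixtureMeasure {D N : ℕ} (hN : 2 ≤ N) (x : Fin N → EuclideanSpace ℝ (Fin D))
    (ε : ℝ) : Measure (EuclideanSpace ℝ (Fin D)) :=
  volume.withDensity fun y => ENNReal.ofReal (mixtureDensity hN x ε y)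

/-- The empirical measure `μ_X = (1/N)·Σ_i δ_{x_i}`. -/
noncomputable def empiricalMeasure {D N : ℕ} (x : Fin N → EuclideanSpace ℝ (Fin D)) :
    Measure (EuclideanSpace ℝ (Fin D)) :=
  ((N : ℝ≥0∞))⁻¹ • ∑ i, Measure.dirac (x i)

/-- The squared 2-Wasserstein distance: the infimum of the quadratic transport cost
over all couplings of `μ` and `ν`. -/
noncomputable def W2sq {D : ℕ} (μ ν : Measure (EuclideanSpace ℝ (Fin D))) : ℝ≥0∞ :=
  ⨅ (pl : Measure (EuclideanSpace ℝ (Fin D) × EuclideanSpace ℝ (Fin D)))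
    (_ : IsProbabilityMeasure pl) (_ : pl.map Prod.fst = μ) (_ : pl.map Prod.snd = ν),
    ∫⁻ p, ENNReal.ofReal (‖p.1 - p.2‖ ^ 2) ∂pl

noncomputable def g1 (m σ t : ℝ) : ℝ :=
  (2 * Real.pi * σ ^ 2) ^ (-(1:ℝ) / 2) * Real.exp (-(t - m) ^ 2 / (2 * σ ^ 2))

variable {D : ℕ} {σ : ℝ}

lemma norm_sq_eq_sum (x y : EuclideanSpace ℝ (Fin D)) :
    ‖y - x‖ ^ 2 = ∑ k, (y k - x k) ^ 2 := by
  rw [EuclideanSpace.norm_eq, Real.sq_sqrt (by positivity)]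
  simp [Real.norm_eq_abs, sq_abs]

lemma gaussDensity_eq_prod (x : EuclideanSpace ℝ (Fin D)) (hσ : 0 < σ)
    (y : EuclideanSpace ℝ (Fin D)) :
    gaussDensity D x σ y = ∏ k, g1 (x k) σ (y k) := by
  unfold gaussDensity g1
  rw [Finset.prod_mul_distrib, Finset.prod_const, ← Real.exp_sum]
  congr 1
  · rw [← Real.rpow_natCast ((2 * Real.pi * σ ^ 2) ^ (-(1:ℝ)/2)) (Finset.univ.card),
      ← Real.rpow_mul (by positivity)]
    congr 1
    simp [Finset.card_univ]
    ring
  · rw [norm_sq_eq_sum]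
    rw [show ∑ k, -(y k - x k) ^ 2 / (2 * σ ^ 2) = (∑ k, -(y k - x k)^2) / (2*σ^2) from
      (Finset.sum_div _ _ _).symm]
    congr 1
    rw [← Finset.sum_neg_distrib]

lemma integral_euc (f : (Fin D → ℝ) → ℝ) :
    ∫ y : EuclideanSpace ℝ (Fin D), f y = ∫ z : Fin D → ℝ, f z :=
  (EuclideanSpace.volume_preserving_symm_measurableEquiv_toLp (Fin D)).integral_comp' f

lemma integrable_euc {f : (Fin D → ℝ) → ℝ} (hf : Integrable f) :
    Integrable (fun y : EuclideanSpace ℝ (Fin D) => f y) :=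
  ((EuclideanSpace.volume_preserving_symm_measurableEquiv_toLp (Fin D)).integrable_comp_emb
    (MeasurableEquiv.measurableEmbedding _)).mpr hf

lemma g1_nonneg (m σ t : ℝ) (hσ : 0 < σ) : 0 ≤ g1 m σ t := by
  unfold g1; positivity

lemma g1_continuous (m σ : ℝ) : Continuous (g1 m σ) := by
  unfold g1; fun_prop

lemma integral_sq_exp {b : ℝ} (hb : 0 < b) :
    ∫ x : ℝ, x ^ 2 * Real.exp (-b * x ^ 2) = Real.sqrt (Real.pi / b) / (2 * b) := by
  have h1 : ∫ x : ℝ, x ^ 2 * Real.exp (-b * x ^ 2)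
      = 2 * ∫ x in Set.Ioi (0:ℝ), x ^ 2 * Real.exp (-b * x ^ 2) := by
    rw [← integral_comp_abs (f := fun x => x ^ 2 * Real.exp (-b * x ^ 2))]
    congr 1; funext x; rw [sq_abs]
  have h2 : ∫ x in Set.Ioi (0:ℝ), x ^ 2 * Real.exp (-b * x ^ 2)
      = b ^ (-(2 + 1) / 2 : ℝ) * (1 / 2) * Real.Gamma ((2 + 1) / 2) := by
    rw [← integral_rpow_mul_exp_neg_mul_rpow two_pos (by norm_num : (-1:ℝ) < 2) hb]
    refine setIntegral_congr_fun measurableSet_Ioi (fun x hx => ?_)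
    simp_rw [Real.rpow_two]
  have hG : Real.Gamma ((2 + 1) / 2 : ℝ) = Real.sqrt Real.pi / 2 := by
    have : ((2:ℝ) + 1) / 2 = 1/2 + 1 := by norm_num
    rw [this, Real.Gamma_add_one (by norm_num), Real.Gamma_one_half_eq]
    ring
  rw [h1, h2, hG]
  rw [show (-(2 + 1) / 2 : ℝ) = (-(1/2)) + (-1) by norm_num, Real.rpow_add hb,
    Real.rpow_neg_one, Real.rpow_neg hb.le]
  rw [← Real.sqrt_eq_rpow, Real.sqrt_div Real.pi_pos.le]
  have hsb : (0:ℝ) < Real.sqrt b := Real.sqrt_pos.mpr hb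
  field_simp


variable {m σ : ℝ}

lemma g1_eq (m σ t : ℝ) : g1 m σ t =
    (2 * Real.pi * σ ^ 2) ^ (-(1:ℝ) / 2) * Real.exp (-(2 * σ ^ 2)⁻¹ * (t - m) ^ 2) := by
  unfold g1
  congr 1
  rw [div_eq_mul_inv, neg_mul, neg_mul, mul_comm]

lemma rpow_half_mul_sqrt {A : ℝ} (hA : 0 < A) : A ^ (-(1:ℝ)/2) * Real.sqrt A = 1 := by
  rw [neg_div, Real.rpow_neg hA.le, Real.sqrt_eq_rpow]
  exact inv_mul_cancel₀ (by positivity)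

lemma integral_g1 (hσ : 0 < σ) : ∫ t : ℝ, g1 m σ t = 1 := by
  have hb : (0:ℝ) < (2 * σ ^ 2)⁻¹ := by positivity
  simp_rw [g1_eq]
  rw [MeasureTheory.integral_const_mul,
    integral_sub_right_eq_self (fun t => Real.exp (-(2 * σ ^ 2)⁻¹ * t ^ 2)) m,
    integral_gaussian]
  have h1 : Real.pi / (2 * σ ^ 2)⁻¹ = 2 * Real.pi * σ ^ 2 := by
    field_simp
  rw [h1]
  exact rpow_half_mul_sqrt (by positivity)

lemma integral_sq_g1 (hσ : 0 < σ) : ∫ t : ℝ, (t - m) ^ 2 * g1 m σ t = σ ^ 2 := by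
  have hb : (0:ℝ) < (2 * σ ^ 2)⁻¹ := by positivity
  have : ∀ t : ℝ, (t - m) ^ 2 * g1 m σ t =
      (2 * Real.pi * σ ^ 2) ^ (-(1:ℝ)/2) *
        ((t - m) ^ 2 * Real.exp (-(2 * σ ^ 2)⁻¹ * (t - m) ^ 2)) := by
    intro t; rw [g1_eq]; ring
  simp_rw [this]
  rw [MeasureTheory.integral_const_mul,
    integral_sub_right_eq_self (fun t => t ^ 2 * Real.exp (-(2 * σ ^ 2)⁻¹ * t ^ 2)) m,
    integral_sq_exp hb]
  have h1 : Real.pi / (2 * σ ^ 2)⁻¹ = 2 * Real.pi * σ ^ 2 := by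
    field_simp
  have h2 : (2 * (2 * σ ^ 2)⁻¹)⁻¹ = σ ^ 2 := by
    rw [mul_inv, inv_inv]; field_simp
  rw [h1, ← mul_div_assoc, rpow_half_mul_sqrt (by positivity), one_div, h2]

lemma integrable_g1 (hσ : 0 < σ) : Integrable (g1 m σ) := by
  have hb : (0:ℝ) < (2 * σ ^ 2)⁻¹ := by positivity
  have := ((integrable_exp_neg_mul_sq hb).comp_sub_right m).const_mul
    ((2 * Real.pi * σ ^ 2) ^ (-(1:ℝ)/2))
  exact this.congr (Filter.Eventually.of_forall fun t => (g1_eq m σ t).symm)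

lemma integrable_sq_g1 (hσ : 0 < σ) : Integrable (fun t : ℝ => (t - m) ^ 2 * g1 m σ t) := by
  have hb : (0:ℝ) < (2 * σ ^ 2)⁻¹ := by positivity
  have h0 : Integrable (fun t : ℝ => t ^ 2 * Real.exp (-(2 * σ ^ 2)⁻¹ * t ^ 2)) := by
    have := integrable_rpow_mul_exp_neg_mul_sq hb (by norm_num : (-1:ℝ) < 2)
    refine this.congr (Filter.Eventually.of_forall fun t => ?_)
    simp only [Real.rpow_two]
  have := (h0.comp_sub_right m).const_mul ((2 * Real.pi * σ ^ 2) ^ (-(1:ℝ)/2))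
  refine this.congr (Filter.Eventually.of_forall fun t => ?_)
  simp only [g1_eq]; ring

lemma integral_gaussDensity (x : EuclideanSpace ℝ (Fin D)) (hσ : 0 < σ) :
    ∫ y, gaussDensity D x σ y = 1 := by
  simp_rw [gaussDensity_eq_prod x hσ]
  calc ∫ y : EuclideanSpace ℝ (Fin D), ∏ k, g1 (x k) σ (y k)
      = ∫ z : Fin D → ℝ, ∏ k, g1 (x k) σ (z k) := integral_euc (fun z => ∏ k, g1 (x k) σ (z k))
    _ = ∏ k : Fin D, ∫ t : ℝ, g1 (x k) σ t := integral_fintype_prod_eq_prod _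
    _ = 1 := by simp [integral_g1 hσ]

lemma integrable_gaussDensity (x : EuclideanSpace ℝ (Fin D)) (hσ : 0 < σ) :
    Integrable (gaussDensity D x σ) := by
  have h : Integrable (fun z : Fin D → ℝ => ∏ k, g1 (x k) σ (z k)) :=
    Integrable.fintype_prod (fun k => integrable_g1 hσ)
  exact (integrable_euc h).congr
    (Filter.Eventually.of_forall fun y => (gaussDensity_eq_prod x hσ y).symm)

lemma continuous_gaussDensity (x : EuclideanSpace ℝ (Fin D)) :
    Continuous (gaussDensity D x σ) := by
  unfold gaussDensity; fun_prop

lemma gaussDensity_nonneg (x : EuclideanSpace ℝ (Fin D)) (hσ : 0 < σ)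
    (y : EuclideanSpace ℝ (Fin D)) : 0 ≤ gaussDensity D x σ y := by
  unfold gaussDensity; positivity

/-- auxiliary factor functions -/
noncomputable def hfun (x : EuclideanSpace ℝ (Fin D)) (σ : ℝ) (k j : Fin D) (t : ℝ) : ℝ :=
  (if j = k then (t - x k) ^ 2 else 1) * g1 (x j) σ t

lemma hfun_integrable (x : EuclideanSpace ℝ (Fin D)) (hσ : 0 < σ) (k j : Fin D) :
    Integrable (hfun x σ k j) := by
  unfold hfun
  by_cases hj : j = k
  · subst hj; simp only [if_pos rfl]
    exact integrable_sq_g1 hσ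
  · simp only [if_neg hj, one_mul]
    exact integrable_g1 hσ

lemma hfun_integral (x : EuclideanSpace ℝ (Fin D)) (hσ : 0 < σ) (k j : Fin D) :
    ∫ t, hfun x σ k j t = if j = k then σ ^ 2 else 1 := by
  unfold hfun
  by_cases hj : j = k
  · subst hj; simp only [if_pos rfl]
    exact integral_sq_g1 hσ
  · simp only [if_neg hj, one_mul]
    exact integral_g1 hσ

lemma sq_mul_prod_eq (x : EuclideanSpace ℝ (Fin D)) (σ : ℝ) (k : Fin D) (z : Fin D → ℝ) :
    (z k - x k) ^ 2 * ∏ j, g1 (x j) σ (z j) = ∏ j, hfun x σ k j (z j) := by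
  unfold hfun
  rw [Finset.prod_mul_distrib]
  congr 1
  rw [Finset.prod_ite_eq' Finset.univ k (fun j => (z j - x k) ^ 2)]
  simp

lemma integral_sq_gaussDensity (x : EuclideanSpace ℝ (Fin D)) (hσ : 0 < σ) :
    ∫ y : EuclideanSpace ℝ (Fin D), ‖y - x‖ ^ 2 * gaussDensity D x σ y = D * σ ^ 2 := by
  have key : ∀ y : EuclideanSpace ℝ (Fin D),
      ‖y - x‖ ^ 2 * gaussDensity D x σ y = ∑ k, ∏ j, hfun x σ k j (y j) := by
    intro y
    rw [gaussDensity_eq_prod x hσ, norm_sq_eq_sum, Finset.sum_mul]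
    exact Finset.sum_congr rfl fun k _ => sq_mul_prod_eq x σ k y
  simp_rw [key]
  calc ∫ y : EuclideanSpace ℝ (Fin D), ∑ k, ∏ j, hfun x σ k j (y j)
      = ∫ z : Fin D → ℝ, ∑ k, ∏ j, hfun x σ k j (z j) := integral_euc (fun z => ∑ k, ∏ j, hfun x σ k j (z j))
    _ = ∑ k : Fin D, ∫ z : Fin D → ℝ, ∏ j, hfun x σ k j (z j) :=
        integral_finset_sum _ (fun k _ => Integrable.fintype_prod (fun j => hfun_integrable x hσ k j))
    _ = ∑ k : Fin D, ∏ j : Fin D, ∫ t, hfun x σ k j t := by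
        refine Finset.sum_congr rfl fun k _ => ?_
        exact integral_fintype_prod_eq_prod _
    _ = ∑ k : Fin D, σ ^ 2 := by
        refine Finset.sum_congr rfl fun k _ => ?_
        simp_rw [hfun_integral x hσ]
        simp
    _ = D * σ ^ 2 := by simp [mul_comm]

lemma integrable_sq_gaussDensity (x : EuclideanSpace ℝ (Fin D)) (hσ : 0 < σ) :
    Integrable (fun y : EuclideanSpace ℝ (Fin D) => ‖y - x‖ ^ 2 * gaussDensity D x σ y) := by
  have h : Integrable (fun z : Fin D → ℝ => ∑ k, ∏ j, hfun x σ k j (z j)) :=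
    integrable_finset_sum _ (fun k _ => Integrable.fintype_prod (fun j => hfun_integrable x hσ k j))
  refine (integrable_euc h).congr (Filter.Eventually.of_forall fun y => ?_)
  show _ = ‖y - x‖ ^ 2 * gaussDensity D x σ y
  rw [gaussDensity_eq_prod x hσ, norm_sq_eq_sum, Finset.sum_mul]
  exact (Finset.sum_congr rfl fun k _ => sq_mul_prod_eq x σ k y).symm

noncomputable def gaussMeasure (D : ℕ) (x : EuclideanSpace ℝ (Fin D)) (σ : ℝ) :
    Measure (EuclideanSpace ℝ (Fin D)) :=
  volume.withDensity fun y => ENNReal.ofReal (gaussDensity D x σ y)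

lemma measurable_ofReal_gaussDensity (x : EuclideanSpace ℝ (Fin D)) :
    Measurable fun y => ENNReal.ofReal (gaussDensity D x σ y) :=
  (continuous_gaussDensity x).measurable.ennreal_ofReal

theorem isProbability_gaussMeasure (x : EuclideanSpace ℝ (Fin D)) (hσ : 0 < σ) :
    IsProbabilityMeasure (gaussMeasure D x σ) := by
  constructor
  rw [gaussMeasure, withDensity_apply _ MeasurableSet.univ, Measure.restrict_univ,
    ← ofReal_integral_eq_lintegral_ofReal (integrable_gaussDensity x hσ)
      (Filter.Eventually.of_forall (gaussDensity_nonneg x hσ)),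
    integral_gaussDensity x hσ, ENNReal.ofReal_one]

lemma lintegral_sq_gaussMeasure (x : EuclideanSpace ℝ (Fin D)) (hσ : 0 < σ) :
    ∫⁻ y, ENNReal.ofReal (‖y - x‖ ^ 2) ∂(gaussMeasure D x σ)
      = ENNReal.ofReal (D * σ ^ 2) := by
  rw [gaussMeasure, lintegral_withDensity_eq_lintegral_mul _ (measurable_ofReal_gaussDensity x)
    (by fun_prop : Measurable fun y : EuclideanSpace ℝ (Fin D) => ENNReal.ofReal (‖y - x‖ ^ 2))]
  have : ∀ y : EuclideanSpace ℝ (Fin D),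
      ((fun y => ENNReal.ofReal (gaussDensity D x σ y)) *
        fun y => ENNReal.ofReal (‖y - x‖ ^ 2)) y
      = ENNReal.ofReal (‖y - x‖ ^ 2 * gaussDensity D x σ y) := by
    intro y
    simp only [Pi.mul_apply]
    rw [← ENNReal.ofReal_mul (gaussDensity_nonneg x hσ y), mul_comm]
  simp_rw [this]
  rw [← ofReal_integral_eq_lintegral_ofReal (integrable_sq_gaussDensity x hσ)
      (Filter.Eventually.of_forall fun y => mul_nonneg (by positivity) (gaussDensity_nonneg x hσ y)),
    integral_sq_gaussDensity x hσ]

lemma withDensity_finset_sum' {α : Type*} {mα : MeasurableSpace α} (μ : Measure α)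
    {ι : Type*} (s : Finset ι) (f : ι → α → ℝ≥0∞) (hf : ∀ i, Measurable (f i)) :
    μ.withDensity (fun a => ∑ i ∈ s, f i a) = ∑ i ∈ s, μ.withDensity (f i) := by
  classical
  induction s using Finset.induction with
  | empty => simp
  | @insert a s ha ih =>
    simp only [Finset.sum_insert ha]
    rw [← ih]
    exact withDensity_add_right _ (Finset.measurable_sum s fun i _ => hf i)

lemma map_finset_sum' {α β : Type*} {mα : MeasurableSpace α} {mβ : MeasurableSpace β}
    {f : α → β} (hf : Measurable f) {ι : Type*} (s : Finset ι) (μ : ι → Measure α) :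
    (∑ i ∈ s, μ i).map f = ∑ i ∈ s, (μ i).map f := by
  classical
  induction s using Finset.induction with
  | empty => simp
  | @insert a s ha ih =>
    simp only [Finset.sum_insert ha]
    rw [Measure.map_add _ _ hf, ih]


/-- with `ρ = max_{i,j} ‖x_i − x_j‖`, there is a coupling `π` of the
mixture measure `ν_ε` and the empirical measure `μ_X` with quadratic transport cost
at most `ε²·D·(ln(1+ρ))²`; in particular the squared 2-Wasserstein distance between
`ν_ε` and `μ_X` is at most `ε²·D·(ln(1+ρ))²`. -/
theorem coupling_cost_le_log_bound {D N : ℕ} (hD : 1 ≤ D) (hN : 2 ≤ N)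
    (x : Fin N → EuclideanSpace ℝ (Fin D)) (hx : Function.Injective x)
    (ε : ℝ) (hε : 0 < ε) (ρ : ℝ)
    (hρ : ρ = Finset.univ.sup'
      (Finset.univ_nonempty_iff.mpr ⟨(⟨0, by omega⟩, ⟨0, by omega⟩)⟩)
      (fun p : Fin N × Fin N => ‖x p.1 - x p.2‖)) :
    (∃ pl : Measure (EuclideanSpace ℝ (Fin D) × EuclideanSpace ℝ (Fin D)),
        IsProbabilityMeasure pl ∧
        pl.map Prod.fst = mixtureMeasure hN x ε ∧
        pl.map Prod.snd = empiricalMeasure x ∧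
        ∫⁻ p, ENNReal.ofReal (‖p.1 - p.2‖ ^ 2) ∂pl ≤
          ENNReal.ofReal (ε ^ 2 * (D : ℝ) * Real.log (1 + ρ) ^ 2)) ∧
      W2sq (mixtureMeasure hN x ε) (empiricalMeasure x) ≤
        ENNReal.ofReal (ε ^ 2 * (D : ℝ) * Real.log (1 + ρ) ^ 2) := by
  classical
  set σ : Fin N → ℝ := sigmaEps hN x ε with hσdef
  -- positivity of minDist and σ
  have hmd_pos : ∀ i, 0 < minDist hN x i := by
    intro i
    rw [minDist]
    rw [Finset.lt_inf'_iff]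
    intro j hj
    have hji : j ≠ i := Finset.ne_of_mem_erase hj
    have : x i ≠ x j := fun h => hji (hx h).symm
    simpa [norm_sub_pos_iff] using sub_ne_zero.mpr this
  have hmd_le : ∀ i, minDist hN x i ≤ ρ := by
    intro i
    have hne : (Finset.univ.erase i).Nonempty := by
      rw [← Finset.card_pos, Finset.card_erase_of_mem (Finset.mem_univ i),
        Finset.card_univ, Fintype.card_fin]
      omega
    obtain ⟨j, hj⟩ := hne
    refine le_trans (Finset.inf'_le _ hj) ?_
    rw [hρ]
    exact Finset.le_sup' (fun p : Fin N × Fin N => ‖x p.1 - x p.2‖) (Finset.mem_univ (i, j))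
  have hρ_pos : 0 < ρ := lt_of_lt_of_le (hmd_pos ⟨0, by omega⟩) (hmd_le _)
  have hσ_pos : ∀ i, 0 < σ i := fun i =>
    mul_pos hε (Real.log_pos (by linarith [hmd_pos i]))
  set L : ℝ := Real.log (1 + ρ) with hLdef
  have hL_pos : 0 < L := Real.log_pos (by linarith)
  have hσ_le : ∀ i, σ i ^ 2 ≤ ε ^ 2 * L ^ 2 := by
    intro i
    have h1 : Real.log (1 + minDist hN x i) ≤ L :=
      Real.log_le_log (by linarith [hmd_pos i]) (by linarith [hmd_le i])
    have h2 : 0 ≤ Real.log (1 + minDist hN x i) :=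
      Real.log_nonneg (by linarith [hmd_pos i])
    rw [hσdef]
    show (ε * Real.log (1 + minDist hN x i)) ^ 2 ≤ _
    rw [mul_pow]
    exact mul_le_mul_of_nonneg_left (pow_le_pow_left₀ h2 h1 2) (by positivity)
  -- the coupling
  set γ : Fin N → Measure (EuclideanSpace ℝ (Fin D)) :=
    fun i => gaussMeasure D (x i) (σ i) with hγdef
  have hγprob : ∀ i, IsProbabilityMeasure (γ i) := fun i =>
    isProbability_gaussMeasure (x i) (hσ_pos i)
  have hme : ∀ i : Fin N, Measurable fun y : EuclideanSpace ℝ (Fin D) => (y, x i) :=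
    fun i => measurable_id.prodMk measurable_const
  set pl0 : Measure (EuclideanSpace ℝ (Fin D) × EuclideanSpace ℝ (Fin D)) :=
    ((N : ℝ≥0∞))⁻¹ • ∑ i, (γ i).map (fun y => (y, x i)) with hpl0def
  have hN0 : (N : ℝ≥0∞) ≠ 0 := by
    simp only [ne_eq, Nat.cast_eq_zero]; omega
  have hNtop : (N : ℝ≥0∞) ≠ ⊤ := ENNReal.natCast_ne_top N
  have hpl0prob : IsProbabilityMeasure pl0 := by
    constructor
    rw [hpl0def, Measure.smul_apply, Measure.finset_sum_apply]
    have : ∀ i : Fin N, ((γ i).map (fun y => (y, x i))) Set.univ = 1 := by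
      intro i
      have := hγprob i
      have : IsProbabilityMeasure ((γ i).map (fun y => (y, x i))) :=
        Measure.isProbabilityMeasure_map (hme i).aemeasurable
      exact this.measure_univ
    simp_rw [this]
    simp only [Finset.sum_const, Finset.card_univ, Fintype.card_fin, nsmul_eq_mul, mul_one,
      smul_eq_mul]
    exact ENNReal.inv_mul_cancel hN0 hNtop
  -- first marginal
  have hfst : pl0.map Prod.fst = mixtureMeasure hN x ε := by
    rw [hpl0def, Measure.map_smul, map_finset_sum' measurable_fst]
    have h1 : ∀ i : Fin N, ((γ i).map (fun y => (y, x i))).map Prod.fst = γ i := by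
      intro i
      rw [Measure.map_map measurable_fst (hme i)]
      exact Measure.map_id
    simp_rw [h1]
    -- now show mixtureMeasure = (N)⁻¹ • ∑ γ i
    rw [mixtureMeasure]
    have h2 : (fun y => ENNReal.ofReal (mixtureDensity hN x ε y))
        = fun y => (N : ℝ≥0∞)⁻¹ *
            ∑ i, ENNReal.ofReal (gaussDensity D (x i) (σ i) y) := by
      funext y
      rw [mixtureDensity, ENNReal.ofReal_mul (by positivity),
        ENNReal.ofReal_sum_of_nonneg (fun i _ => gaussDensity_nonneg (x i) (hσ_pos i) y)]
      congr 1
      rw [one_div, ENNReal.ofReal_inv_of_pos (Nat.cast_pos.mpr (by omega) : (0:ℝ) < N),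
        ENNReal.ofReal_natCast]
    rw [h2]
    have h3 : (fun y => (N : ℝ≥0∞)⁻¹ *
          ∑ i, ENNReal.ofReal (gaussDensity D (x i) (σ i) y))
        = (N : ℝ≥0∞)⁻¹ • fun y => ∑ i, ENNReal.ofReal (gaussDensity D (x i) (σ i) y) := rfl
    rw [h3, withDensity_smul _ (Finset.measurable_sum _
        fun i _ => measurable_ofReal_gaussDensity (x i)),
      withDensity_finset_sum' volume Finset.univ _
        fun i => measurable_ofReal_gaussDensity (x i)]
    rfl
  -- second marginal
  have hsnd : pl0.map Prod.snd = empiricalMeasure x := by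
    rw [hpl0def, Measure.map_smul, map_finset_sum' measurable_snd]
    have h1 : ∀ i : Fin N, ((γ i).map (fun y => (y, x i))).map Prod.snd
        = Measure.dirac (x i) := by
      intro i
      rw [Measure.map_map measurable_snd (hme i)]
      have : (Prod.snd ∘ fun y : EuclideanSpace ℝ (Fin D) => (y, x i))
          = fun _ => x i := rfl
      rw [this, Measure.map_const, (hγprob i).measure_univ, one_smul]
    simp_rw [h1]
    rfl
  -- cost
  have hcost : ∫⁻ p, ENNReal.ofReal (‖p.1 - p.2‖ ^ 2) ∂pl0 ≤
      ENNReal.ofReal (ε ^ 2 * (D : ℝ) * L ^ 2) := by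
    have hmcost : Measurable fun p : EuclideanSpace ℝ (Fin D) × EuclideanSpace ℝ (Fin D) =>
        ENNReal.ofReal (‖p.1 - p.2‖ ^ 2) := by fun_prop
    rw [hpl0def, lintegral_smul_measure, lintegral_finset_sum_measure]
    have h1 : ∀ i : Fin N, ∫⁻ p, ENNReal.ofReal (‖p.1 - p.2‖ ^ 2)
        ∂((γ i).map (fun y => (y, x i)))
        = ENNReal.ofReal ((D : ℝ) * σ i ^ 2) := by
      intro i
      rw [lintegral_map hmcost (hme i)]
      simpa using lintegral_sq_gaussMeasure (x i) (hσ_pos i)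
    simp_rw [h1]
    calc (N : ℝ≥0∞)⁻¹ * ∑ i : Fin N, ENNReal.ofReal ((D : ℝ) * σ i ^ 2)
        ≤ (N : ℝ≥0∞)⁻¹ * ∑ _i : Fin N, ENNReal.ofReal (ε ^ 2 * (D : ℝ) * L ^ 2) := by
          refine mul_le_mul_right (Finset.sum_le_sum fun i _ => ?_) _
          refine ENNReal.ofReal_le_ofReal ?_
          calc (D : ℝ) * σ i ^ 2 ≤ (D : ℝ) * (ε ^ 2 * L ^ 2) := by
                exact mul_le_mul_of_nonneg_left (hσ_le i) (by positivity)
            _ = ε ^ 2 * (D : ℝ) * L ^ 2 := by ring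
      _ = (N : ℝ≥0∞)⁻¹ * ((N : ℝ≥0∞) * ENNReal.ofReal (ε ^ 2 * (D : ℝ) * L ^ 2)) := by
          rw [Finset.sum_const, Finset.card_univ, Fintype.card_fin, nsmul_eq_mul]
      _ = ENNReal.ofReal (ε ^ 2 * (D : ℝ) * L ^ 2) := by
          rw [← mul_assoc, ENNReal.inv_mul_cancel hN0 hNtop, one_mul]
  refine ⟨⟨pl0, hpl0prob, hfst, hsnd, hcost⟩, ?_⟩
  refine le_trans ?_ hcost
  exact iInf_le_of_le pl0 (iInf_le_of_le hpl0prob (iInf_le_of_le hfst (iInf_le_of_le hsnd le_rfl)))
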